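/- For every integer k ≥ 0, the space P_k(ℝ³; ℝ³) of vector fields with polynomial components of total degree at most k decomposes as the direct sum P_k(ℝ³; ℝ³) = (∇ × P_{k+1}(ℝ³; ℝ³)) ⊕ (x · P_{k-1}(ℝ³)): the subspaces {∇ × v : v a polynomial vector field with components of total degree ≤ k+1} and {x p : p a polynomial of total degree ≤ k−1} together span P_k(ℝ³; ℝ³), and their intersection is {0}. -/

import Mathlib

open MvPolynomial

noncomputable section

/-- `degLE p m` means `p ∈ P_m`: either `p = 0` or the total degree of `p` is at most `m`
(with the convention `P_{-1} = {0}`). -/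
def degLE (p : MvPolynomial (Fin 3) ℝ) (m : ℤ) : Prop :=
  p = 0 ∨ (p.totalDegree : ℤ) ≤ m

/-- The formal curl `∇ × v = (∂₂v₃ − ∂₃v₂, ∂₃v₁ − ∂₁v₃, ∂₁v₂ − ∂₂v₁)` of a polynomial
vector field on `ℝ³`. -/
def pcurl (v : Fin 3 → MvPolynomial (Fin 3) ℝ) : Fin 3 → MvPolynomial (Fin 3) ℝ :=
  ![pderiv 1 (v 2) - pderiv 2 (v 1),
    pderiv 2 (v 0) - pderiv 0 (v 2),
    pderiv 0 (v 1) - pderiv 1 (v 0)]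

/-- The vector field `x p = (x₁p, x₂p, x₃p)`. -/
def xMul (p : MvPolynomial (Fin 3) ℝ) : Fin 3 → MvPolynomial (Fin 3) ℝ :=
  fun i => X i * p

/-! ### Auxiliary material -/

abbrev MP := MvPolynomial (Fin 3) ℝ

lemma coeff_pderiv (i : Fin 3) (m : Fin 3 →₀ ℕ) (p : MP) :
    coeff m (pderiv i p) = ((m i + 1 : ℕ) : ℝ) * coeff (m + Finsupp.single i 1) p := by
  induction p using MvPolynomial.induction_on' with
  | monomial s a =>
    rw [pderiv_monomial, coeff_monomial, coeff_monomial]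
    by_cases h : s = m + Finsupp.single i 1
    · subst h
      simp [add_tsub_cancel_right, Finsupp.add_apply, Finsupp.single_apply, mul_comm]
    · rw [if_neg h]
      by_cases h2 : s - Finsupp.single i 1 = m
      · rw [if_pos h2]
        have hs : s i = 0 := by
          by_contra hne
          have hle : Finsupp.single i 1 ≤ s := by
            rw [Finsupp.single_le_iff]; omega
          have := tsub_add_cancel_of_le hle
          rw [h2] at this
          exact h this.symm
        simp [hs]
      · simp [h2]
  | add p q hp hq => simp [hp, hq, mul_add]

lemma pderiv_comm' (i j : Fin 3) (p : MP) :
    pderiv i (pderiv j p) = pderiv j (pderiv i p) := by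
  ext m
  rw [coeff_pderiv, coeff_pderiv, coeff_pderiv, coeff_pderiv]
  by_cases h : i = j
  · subst h; ring
  · have h1 : ((m + Finsupp.single i 1 : Fin 3 →₀ ℕ)) j = m j := by
      simp [Finsupp.add_apply, Finsupp.single_apply, h]
    have h2 : ((m + Finsupp.single j 1 : Fin 3 →₀ ℕ)) i = m i := by
      simp [Finsupp.add_apply, Finsupp.single_apply, Ne.symm h]
    rw [h1, h2, add_right_comm]
    ring

lemma coeff_X_mul_pderiv (j : Fin 3) (m : Fin 3 →₀ ℕ) (p : MP) :
    coeff m (X j * pderiv j p) = ((m j : ℕ) : ℝ) * coeff m p := by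
  rw [coeff_X_mul']
  by_cases h : j ∈ m.support
  · have hj : m j ≠ 0 := Finsupp.mem_support_iff.mp h
    rw [if_pos h, coeff_pderiv]
    have h1 : ((m - Finsupp.single j 1 : Fin 3 →₀ ℕ)) j + 1 = m j := by
      simp [Finsupp.tsub_apply, Finsupp.single_apply]; omega
    have h2 : m - Finsupp.single j 1 + Finsupp.single j 1 = m := by
      apply tsub_add_cancel_of_le
      rw [Finsupp.single_le_iff]; omega
    rw [h1, h2]
  · have hj : m j = 0 := by simpa using h
    rw [if_neg h, hj]
    simp

/-- degree of an exponent vector -/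
def mdeg (m : Fin 3 →₀ ℕ) : ℕ := m.sum fun _ e => e

/-- the Euler operator `p ↦ Σ xᵢ ∂ᵢ p` -/
def eul (p : MP) : MP := X 0 * pderiv 0 p + X 1 * pderiv 1 p + X 2 * pderiv 2 p

/-- formal divergence -/
def pdiv (v : Fin 3 → MP) : MP := pderiv 0 (v 0) + pderiv 1 (v 1) + pderiv 2 (v 2)

/-- the cross product `u × x` -/
def cr (u : Fin 3 → MP) : Fin 3 → MP :=
  ![u 1 * X 2 - u 2 * X 1, u 2 * X 0 - u 0 * X 2, u 0 * X 1 - u 1 * X 0]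

lemma mdeg_eq (m : Fin 3 →₀ ℕ) : mdeg m = m 0 + m 1 + m 2 := by
  rw [mdeg, Finsupp.sum_fintype _ _ (fun _ => rfl), Fin.sum_univ_three]

lemma coeff_eul (m : Fin 3 →₀ ℕ) (p : MP) :
    coeff m (eul p) = ((mdeg m : ℕ) : ℝ) * coeff m p := by
  rw [eul, coeff_add, coeff_add, coeff_X_mul_pderiv, coeff_X_mul_pderiv,
    coeff_X_mul_pderiv, mdeg_eq]
  push_cast; ring

/-- the operator dividing each monomial of degree `d` by `d + 2` -/
def scale (p : MP) : MP :=
  ∑ m ∈ p.support, monomial m ((((mdeg m : ℕ) : ℝ) + 2)⁻¹ * coeff m p)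

lemma coeff_scale (m : Fin 3 →₀ ℕ) (p : MP) :
    coeff m (scale p) = (((mdeg m : ℕ) : ℝ) + 2)⁻¹ * coeff m p := by
  rw [scale, MvPolynomial.coeff_sum]
  simp only [coeff_monomial]
  rw [Finset.sum_ite_eq' p.support m]
  by_cases h : m ∈ p.support
  · rw [if_pos h]
  · rw [if_neg h]
    have : coeff m p = 0 := by simpa [mem_support_iff] using h
    simp [this]

lemma scale_spec (p : MP) : 2 * scale p + eul (scale p) = p := by
  ext m
  rw [coeff_add, coeff_eul, coeff_scale, two_mul, coeff_add, coeff_scale]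
  have hne : (((mdeg m : ℕ) : ℝ) + 2) ≠ 0 := by positivity
  field_simp
  ring

lemma key_identity (u : Fin 3 → MP) (i : Fin 3) :
    pcurl (cr u) i + xMul (pdiv u) i = 2 * u i + eul (u i) := by
  fin_cases i <;>
    simp [pcurl, cr, xMul, pdiv, eul, pderiv_mul, pderiv_X_self,
      pderiv_X_of_ne (show (1:Fin 3) ≠ 0 by decide),
      pderiv_X_of_ne (show (2:Fin 3) ≠ 0 by decide),
      pderiv_X_of_ne (show (0:Fin 3) ≠ 1 by decide),
      pderiv_X_of_ne (show (2:Fin 3) ≠ 1 by decide),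
      pderiv_X_of_ne (show (0:Fin 3) ≠ 2 by decide),
      pderiv_X_of_ne (show (1:Fin 3) ≠ 2 by decide)] <;>
    ring

lemma totalDegree_le_of {p : MP} {d : ℕ}
    (h : ∀ m, coeff m p ≠ 0 → mdeg m ≤ d) : p.totalDegree ≤ d :=
  Finset.sup_le fun m hm => h m (mem_support_iff.mp hm)

lemma degLE_zero (m : ℤ) : degLE 0 m := Or.inl rfl

lemma degLE_add {p q : MP} {m : ℤ} (hp : degLE p m) (hq : degLE q m) :
    degLE (p + q) m := by
  rcases hp with rfl | hp
  · simpa using hq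
  rcases hq with rfl | hq
  · right; simpa using hp
  right
  have := totalDegree_add p q
  have h2 : ((p + q).totalDegree : ℤ) ≤ max (p.totalDegree : ℤ) (q.totalDegree : ℤ) := by
    rw [← Nat.cast_max]
    exact_mod_cast this
  exact le_trans h2 (max_le hp hq)

lemma degLE_sub {p q : MP} {m : ℤ} (hp : degLE p m) (hq : degLE q m) :
    degLE (p - q) m := by
  rw [sub_eq_add_neg]
  apply degLE_add hp
  rcases hq with rfl | hq
  · simpa using degLE_zero m
  · right; rwa [totalDegree_neg]

lemma mdeg_add_single (m : Fin 3 →₀ ℕ) (i : Fin 3) :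
    mdeg (m + Finsupp.single i 1) = mdeg m + 1 := by
  rw [mdeg, mdeg, Finsupp.sum_add_index' (fun _ => rfl) (fun _ _ _ => rfl),
    Finsupp.sum_single_index rfl]

lemma degLE_pderiv {p : MP} {m : ℤ} (i : Fin 3) (hp : degLE p m) :
    degLE (pderiv i p) (m - 1) := by
  rcases hp with rfl | hp
  · simpa using degLE_zero (m - 1)
  by_cases hz : pderiv i p = 0
  · exact Or.inl hz
  right
  have hkey : ∀ m', coeff m' (pderiv i p) ≠ 0 → mdeg m' + 1 ≤ p.totalDegree := by
    intro m' hc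
    rw [coeff_pderiv] at hc
    have hc2 : coeff (m' + Finsupp.single i 1) p ≠ 0 := fun h => hc (by simp [h])
    have := le_totalDegree (mem_support_iff.mpr hc2)
    rw [show ((m' + Finsupp.single i 1 : Fin 3 →₀ ℕ).sum fun _ e => e) =
        mdeg (m' + Finsupp.single i 1) from rfl, mdeg_add_single] at this
    exact this
  obtain ⟨m', hm'⟩ := MvPolynomial.ne_zero_iff.mp hz
  have hD : 1 ≤ p.totalDegree := le_trans (by omega) (hkey m' hm')
  have hle : (pderiv i p).totalDegree ≤ p.totalDegree - 1 := by
    apply totalDegree_le_of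
    intro m'' hc
    have := hkey m'' hc
    omega
  have : ((pderiv i p).totalDegree : ℤ) ≤ (p.totalDegree : ℤ) - 1 := by
    have := Nat.cast_le (α := ℤ).mpr hle
    push_cast at this
    omega
  omega

lemma degLE_scale {p : MP} {m : ℤ} (hp : degLE p m) : degLE (scale p) m := by
  rcases hp with rfl | hp
  · left; simp [scale]
  right
  have : (scale p).totalDegree ≤ p.totalDegree := by
    apply totalDegree_le_of
    intro m' hc
    rw [coeff_scale] at hc
    have hc2 : coeff m' p ≠ 0 := fun h => hc (by simp [h])
    exact le_totalDegree (mem_support_iff.mpr hc2)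
  exact le_trans (Nat.cast_le.mpr this) hp

lemma degLE_mul_X {p : MP} {m : ℤ} (i : Fin 3) (hp : degLE p m) :
    degLE (p * X i) (m + 1) := by
  rcases hp with rfl | hp
  · simpa using degLE_zero (m + 1)
  right
  have h := totalDegree_mul p (X i : MP)
  rw [totalDegree_X] at h
  have : ((p * X i).totalDegree : ℤ) ≤ (p.totalDegree : ℤ) + 1 := by exact_mod_cast h
  omega

lemma pdiv_pcurl (w : Fin 3 → MP) : pdiv (pcurl w) = 0 := by
  simp only [pdiv, pcurl, Matrix.cons_val_zero, Matrix.cons_val_one, Matrix.head_cons,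
    Matrix.cons_val_two, Matrix.tail_cons, map_sub]
  rw [pderiv_comm' 0 1 (w 2), pderiv_comm' 0 2 (w 1), pderiv_comm' 1 2 (w 0)]
  ring

lemma pdiv_xMul (p : MP) : pdiv (xMul p) = p + p + p + eul p := by
  simp only [pdiv, xMul, eul, pderiv_mul, pderiv_X_self]
  ring

/-- For every `k ≥ 0`,
`P_k(ℝ³;ℝ³) = (∇ × P_{k+1}(ℝ³;ℝ³)) ⊕ (x · P_{k-1}(ℝ³))`: the two subspaces together span
`P_k(ℝ³;ℝ³)` and their intersection is `{0}`. -/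
theorem polynomial_decomposition_curl_xmul (k : ℕ) :
    (∀ v : Fin 3 → MvPolynomial (Fin 3) ℝ, (∀ i, degLE (v i) (k : ℤ)) →
      ∃ (w : Fin 3 → MvPolynomial (Fin 3) ℝ) (p : MvPolynomial (Fin 3) ℝ),
        (∀ i, degLE (w i) ((k : ℤ) + 1)) ∧ degLE p ((k : ℤ) - 1) ∧
        v = fun i => pcurl w i + xMul p i) ∧
    (∀ v : Fin 3 → MvPolynomial (Fin 3) ℝ,
      (∃ w : Fin 3 → MvPolynomial (Fin 3) ℝ,
        (∀ i, degLE (w i) ((k : ℤ) + 1)) ∧ v = pcurl w) →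
      (∃ p : MvPolynomial (Fin 3) ℝ, degLE p ((k : ℤ) - 1) ∧ v = xMul p) →
      v = 0) := by
  constructor
  · intro v hv
    set u : Fin 3 → MP := fun i => scale (v i) with hu
    have hud : ∀ i, degLE (u i) (k : ℤ) := fun i => degLE_scale (hv i)
    refine ⟨cr u, pdiv u, ?_, ?_, ?_⟩
    · intro i
      fin_cases i <;>
        exact degLE_sub (degLE_mul_X _ (hud _)) (degLE_mul_X _ (hud _))
    · exact degLE_add (degLE_add (degLE_pderiv _ (hud 0)) (degLE_pderiv _ (hud 1)))
        (degLE_pderiv _ (hud 2))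
    · funext i
      rw [key_identity u i]
      exact (scale_spec (v i)).symm
  · rintro v ⟨w, -, rfl⟩ ⟨p, -, hx⟩
    have h0 : p + p + p + eul p = 0 := by
      rw [← pdiv_xMul, ← hx, pdiv_pcurl]
    have hp : p = 0 := by
      ext m
      have := congrArg (coeff m) h0
      rw [coeff_add, coeff_add, coeff_add, coeff_eul, coeff_zero] at this
      have hpos : (0:ℝ) < 3 + ((mdeg m : ℕ) : ℝ) := by positivity
      have : (3 + ((mdeg m : ℕ) : ℝ)) * coeff m p = 0 := by linarith
      rw [coeff_zero]
      exact (mul_eq_zero.mp this).resolve_left (ne_of_gt hpos)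
    rw [hx, hp]
    funext i
    simp [xMul]
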